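/- Root-Hadamard transform as a generalized Walsh–Hadamard transform: Let n ≥ 1, k ≥ 1, q = 2^k, f : F_2^n → Z_q, K a finite index set, r : {0,...,n-1} → K, and for s ∈ K let α_s = exp(2πi/2^{m_s}) with 1 ≤ m_s ≤ k. For s ∈ K let R_s = r^{-1}(s) and wt(x_{R_s}) = Σ_{j ∈ R_s} x_j ∈ ℕ. Define h : F_2^n → Z_q by h(x) = f(x) - Σ_{s ∈ K} 2^{k - m_s}·(wt(x_{R_s}) mod 2^{m_s}) (computed in Z_q). Then for all u ∈ F_2^n: U_h(u) = H_f(u), where U_h(u) = 2^{-n/2} Σ_x ζ_q^{h(x)} (-1)^{u·x} Π_{j=0}^{n-1} α_{r(j)}^{x_j} and H_f(u) = 2^{-n/2} Σ_x ζ_q^{f(x)} (-1)^{u·x}. -/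

import Mathlib

open Complex Finset

noncomputable section

/-- `ζ_q = exp(2πi/q)`. -/
def zetaC (q : ℕ) : ℂ := Complex.exp (2 * Real.pi * Complex.I / q)

/-- Hamming weight of a binary vector. -/
def wtv {n : ℕ} (x : Fin n → ZMod 2) : ℕ := ∑ j, (x j).val

/-- `(-1)^{u·x}` where `u·x` is the dot product over `F_2`. -/
def chr {n : ℕ} (u x : Fin n → ZMod 2) : ℂ := (-1 : ℂ) ^ (∑ j, u j * x j : ZMod 2).val

/-- `2^{-n/2}` as a complex number. -/
def nrm (n : ℕ) : ℂ := (((2 : ℝ) ^ (-(n : ℝ) / 2) : ℝ) : ℂ)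

/-- `λ(x) = Π_j α_{r(j)}^{x_j}`. -/
def lamb {n : ℕ} {K : Type*} (r : Fin n → K) (α : K → ℂ) (x : Fin n → ZMod 2) : ℂ :=
  ∏ j, α (r j) ^ (x j).val

/-- The root-Hadamard transform `U_f(u) = 2^{-n/2} Σ_x ζ_q^{f(x)} (-1)^{u·x} λ(x)`. -/
def rootH {n q : ℕ} {K : Type*} (r : Fin n → K) (α : K → ℂ)
    (f : (Fin n → ZMod 2) → ZMod q) (u : Fin n → ZMod 2) : ℂ :=
  nrm n * ∑ x, zetaC q ^ (f x).val * chr u x * lamb r α x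

/-- The generalized Walsh-Hadamard transform `H_f(u) = 2^{-n/2} Σ_x ζ_q^{f(x)} (-1)^{u·x}`. -/
def genH {n q : ℕ} (f : (Fin n → ZMod 2) → ZMod q) (u : Fin n → ZMod 2) : ℂ :=
  nrm n * ∑ x, zetaC q ^ (f x).val * chr u x

/-- `wt(x_{R_s}) = Σ_{j ∈ R_s} x_j`, the weight of `x` restricted to `R_s = r⁻¹(s)`. -/
def wtR {n : ℕ} {K : Type*} [DecidableEq K] (r : Fin n → K) (s : K) (x : Fin n → ZMod 2) : ℕ :=
  ∑ j ∈ Finset.univ.filter (fun j => r j = s), (x j).val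


lemma zetaC_isPrim (q : ℕ) (hq : q ≠ 0) : IsPrimitiveRoot (zetaC q) q := by
  simpa [zetaC] using Complex.isPrimitiveRoot_exp q hq

lemma zetaC_pow_mod (q : ℕ) (hq : q ≠ 0) (a : ℕ) : zetaC q ^ a = zetaC q ^ (a % q) := by
  have h1 : zetaC q ^ q = 1 := (zetaC_isPrim q hq).pow_eq_one
  conv_lhs => rw [← Nat.div_add_mod a q]
  rw [pow_add, pow_mul, h1, one_pow, one_mul]

lemma zetaC_pow_congr {q : ℕ} (hq : q ≠ 0) {a b : ℕ} (hab : a ≡ b [MOD q]) :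
    zetaC q ^ a = zetaC q ^ b := by
  rw [zetaC_pow_mod q hq a, zetaC_pow_mod q hq b, hab]

lemma zetaC_pow_two_pow {k mk : ℕ} (hms : mk ≤ k) :
    zetaC (2 ^ mk) = zetaC (2 ^ k) ^ (2 ^ (k - mk)) := by
  unfold zetaC
  rw [← Complex.exp_nat_mul]
  congr 1
  have h2' : ((2:ℂ) ^ mk) ≠ 0 := pow_ne_zero _ two_ne_zero
  have h2'' : ((2:ℂ) ^ (k - mk)) ≠ 0 := pow_ne_zero _ two_ne_zero
  have hkey : (2:ℂ) ^ k = 2 ^ (k - mk) * 2 ^ mk := by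
    rw [← pow_add, Nat.sub_add_cancel hms]
  push_cast
  rw [hkey]
  field_simp

/-- the root-Hadamard transform as a generalized Walsh-Hadamard
transform, via `h(x) = f(x) - Σ_{s ∈ K} 2^{k-m_s} (wt(x_{R_s}) mod 2^{m_s})`. -/
theorem rootH_eq_genH {n k : ℕ} (hn : 1 ≤ n) (hk : 1 ≤ k)
    {K : Type*} [Fintype K] [DecidableEq K] (r : Fin n → K)
    (m : K → ℕ) (hm : ∀ s, 1 ≤ m s ∧ m s ≤ k)
    (f h : (Fin n → ZMod 2) → ZMod (2 ^ k))
    (hh : ∀ x, h x = f x -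
      ((∑ s : K, 2 ^ (k - m s) * (wtR r s x % 2 ^ m s) : ℕ) : ZMod (2 ^ k)))
    (u : Fin n → ZMod 2) :
    rootH r (fun s => zetaC (2 ^ m s)) h u = genH f u := by
  have hq : (2:ℕ) ^ k ≠ 0 := pow_ne_zero k two_ne_zero
  unfold rootH genH
  congr 1
  apply Finset.sum_congr rfl
  intro x _
  set N : ℕ := ∑ s : K, 2 ^ (k - m s) * (wtR r s x % 2 ^ m s) with hN
  have hlamb : lamb r (fun s => zetaC (2 ^ m s)) x = zetaC (2 ^ k) ^ N := by
    unfold lamb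
    rw [← Finset.prod_fiberwise_of_maps_to (g := r) (t := (Finset.univ : Finset K))
      (fun j _ => Finset.mem_univ (r j))]
    rw [hN, ← Finset.prod_pow_eq_pow_sum]
    apply Finset.prod_congr rfl
    intro s _
    have h1 : ∏ j ∈ Finset.univ.filter (fun j => r j = s),
        (zetaC (2 ^ m (r j))) ^ (x j).val
        = zetaC (2 ^ m s) ^ wtR r s x := by
      rw [wtR, ← Finset.prod_pow_eq_pow_sum]
      apply Finset.prod_congr rfl
      intro j hj
      rw [(Finset.mem_filter.mp hj).2]
    rw [h1, zetaC_pow_two_pow (hm s).2, ← pow_mul]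
    apply zetaC_pow_congr hq
    have := (Nat.mod_modEq (wtR r s x) (2 ^ m s)).symm.mul_left' (c := 2 ^ (k - m s))
    rwa [← pow_add, Nat.sub_add_cancel (hm s).2] at this
  rw [hlamb, mul_assoc, mul_comm (chr u x), ← mul_assoc, ← pow_add]
  have hmod : (h x).val + N ≡ (f x).val [MOD 2 ^ k] := by
    have : (((h x).val + N : ℕ) : ZMod (2 ^ k)) = (((f x).val : ℕ) : ZMod (2 ^ k)) := by
      push_cast
      simp only [ZMod.natCast_val, ZMod.cast_id]
      rw [hh x]
      ring
    exact (ZMod.natCast_eq_natCast_iff _ _ _).mp this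
  rw [zetaC_pow_congr hq hmod]


end
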